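/- Let s ≥ 2, h = (1,2) ∈ Sym(4s), g = (1,3,5,…,4s−1)(2,4,6,…,4s) ∈ Sym(4s), and H = ⟨h, h^g, h^{g²}, …, h^{g^{s−1}}⟩. Then H is the internal direct product ⟨(1,2)⟩ × ⟨(3,4)⟩ × ··· × ⟨(2s−1,2s)⟩ ≅ C₂^s, and H ∩ H^g ≅ C₂^{s−1}. -/

import Mathlib

open Equiv Subgroup Finset

section Gen
variable {α : Type*} [DecidableEq α] {ι : Type*} [Fintype ι] [DecidableEq ι]

lemma pow_zmod2_add (x : Equiv.Perm α) (hx : x * x = 1) (u v : ZMod 2) :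
    x ^ (u + v).val = x ^ u.val * x ^ v.val := by
  have hall : ∀ w : ZMod 2, w = 0 ∨ w = 1 := by decide
  have e0 : ((0:ZMod 2)).val = 0 := rfl
  have e1 : ((1:ZMod 2)).val = 1 := rfl
  have e2 : ((1+1:ZMod 2)).val = 0 := rfl
  rcases hall u with rfl | rfl <;> rcases hall v with rfl | rfl <;>
    simp [e0, e1, e2, hx]

lemma comm_aux (σ : ι → Equiv.Perm α) (hcomm : ∀ i j, Commute (σ i) (σ j))
    (f g : ι → ZMod 2) :
    ∀ i ∈ (univ : Finset ι), ∀ j ∈ (univ : Finset ι), i ≠ j →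
      Commute (σ i ^ (f i).val) (σ j ^ (g j).val) :=
  fun i _ j _ _ => (hcomm i j).pow_pow _ _

noncomputable def phi (σ : ι → Equiv.Perm α) (hcomm : ∀ i j, Commute (σ i) (σ j))
    (hinv : ∀ i, σ i * σ i = 1) : Multiplicative (ι → ZMod 2) →* Equiv.Perm α :=
  MonoidHom.mk' (fun f => Finset.univ.noncommProd
      (fun i => σ i ^ ((Multiplicative.toAdd f) i).val) (comm_aux σ hcomm _ _))
    (by
      intro f f'
      beta_reduce
      have congr1 : Finset.univ.noncommProd
          (fun i => σ i ^ ((Multiplicative.toAdd (f * f')) i).val) (comm_aux σ hcomm _ _) =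
          Finset.univ.noncommProd
            ((fun i => σ i ^ ((Multiplicative.toAdd f) i).val) *
             (fun i => σ i ^ ((Multiplicative.toAdd f') i).val))
            (Finset.noncommProd_mul_distrib_aux (comm_aux σ hcomm _ _) (comm_aux σ hcomm _ _)
              (comm_aux σ hcomm _ _)) := by
        apply Finset.noncommProd_congr rfl
        intro i _
        exact pow_zmod2_add _ (hinv i) _ _
      rw [congr1]
      exact Finset.noncommProd_mul_distrib _ _ (comm_aux σ hcomm _ _) (comm_aux σ hcomm _ _)
        (comm_aux σ hcomm _ _))

lemma phi_decomp (σ : ι → Equiv.Perm α) (hcomm : ∀ i j, Commute (σ i) (σ j))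
    (hinv : ∀ i, σ i * σ i = 1) (f : ι → ZMod 2) (i : ι) :
    phi σ hcomm hinv (Multiplicative.ofAdd f) = σ i ^ (f i).val *
      (Finset.univ.erase i).noncommProd (fun j => σ j ^ (f j).val)
        (fun x hx y hy hxy =>
          comm_aux σ hcomm f f x (Finset.mem_univ x) y (Finset.mem_univ y) hxy) :=
  (Finset.mul_noncommProd_erase Finset.univ (Finset.mem_univ i)
    (fun j => σ j ^ (f j).val) (comm_aux σ hcomm f f)).symm

lemma phi_apply_a (σ : ι → Equiv.Perm α) (hcomm : ∀ i j, Commute (σ i) (σ j))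
    (hinv : ∀ i, σ i * σ i = 1) (a : ι → α)
    (hfix : ∀ i j, j ≠ i → σ j (a i) = a i) (f : ι → ZMod 2) (i : ι) :
    phi σ hcomm hinv (Multiplicative.ofAdd f) (a i) = (σ i ^ (f i).val) (a i) := by
  rw [phi_decomp σ hcomm hinv f i, Equiv.Perm.mul_apply]
  congr 1
  refine Finset.noncommProd_induction _ _ _ (fun x : Equiv.Perm α => x (a i) = a i) ?_ rfl ?_
  · intro x y hx hy; simp [Equiv.Perm.mul_apply, hy, hx]
  · intro j hj
    have hji : j ≠ i := (Finset.mem_erase.1 hj).1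
    induction (f j).val with
    | zero => simp
    | succ n ih => rw [pow_succ, Equiv.Perm.mul_apply, hfix i j hji, ih]

lemma phi_injective (σ : ι → Equiv.Perm α) (hcomm : ∀ i j, Commute (σ i) (σ j))
    (hinv : ∀ i, σ i * σ i = 1) (a : ι → α)
    (hfix : ∀ i j, j ≠ i → σ j (a i) = a i)
    (hmove : ∀ i, σ i (a i) ≠ a i) :
    Function.Injective (phi σ hcomm hinv) := by
  rw [← MonoidHom.ker_eq_bot_iff, eq_bot_iff]
  intro f hf
  rw [MonoidHom.mem_ker] at hf
  have hz : ∀ i, (Multiplicative.toAdd f) i = 0 := by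
    intro i
    by_contra hne
    have hv : ((Multiplicative.toAdd f) i).val = 1 := by
      have h1 := ZMod.val_lt ((Multiplicative.toAdd f) i)
      have h2 : ((Multiplicative.toAdd f) i).val ≠ 0 := by
        intro h0; exact hne ((ZMod.val_eq_zero _).1 h0)
      omega
    have heval := phi_apply_a σ hcomm hinv a hfix (Multiplicative.toAdd f) i
    rw [ofAdd_toAdd, hf] at heval
    rw [hv, pow_one] at heval
    exact hmove i heval.symm
  have hfz : Multiplicative.toAdd f = 0 := funext hz
  have hf1 : f = 1 := Multiplicative.toAdd.injective (by rw [hfz, toAdd_one])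
  simp [Subgroup.mem_bot, hf1]

lemma phi_range (σ : ι → Equiv.Perm α) (hcomm : ∀ i j, Commute (σ i) (σ j))
    (hinv : ∀ i, σ i * σ i = 1) :
    (phi σ hcomm hinv).range = Subgroup.closure (Set.range σ) := by
  apply le_antisymm
  · rintro x ⟨f, rfl⟩
    show (Finset.univ.noncommProd (fun i => σ i ^ ((Multiplicative.toAdd f) i).val)
      (comm_aux σ hcomm _ _)) ∈ Subgroup.closure (Set.range σ)
    refine Finset.noncommProd_induction _ _ _ (· ∈ Subgroup.closure (Set.range σ))
      (fun _ _ => mul_mem) (one_mem _) ?_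
    intro i _
    exact pow_mem (subset_closure (Set.mem_range_self i)) _
  · rw [Subgroup.closure_le]
    rintro x ⟨i, rfl⟩
    refine ⟨Multiplicative.ofAdd (Pi.single i (1:ZMod 2)), ?_⟩
    rw [phi_decomp σ hcomm hinv (Pi.single i (1:ZMod 2)) i]
    have h2 : (Finset.univ.erase i).noncommProd
        (fun j => σ j ^ (((Pi.single i (1:ZMod 2) : ι → ZMod 2)) j).val)
        (fun x hx y hy hxy => comm_aux σ hcomm _ _ x (Finset.mem_univ x) y (Finset.mem_univ y) hxy)
        = 1 := by
      refine Finset.noncommProd_induction _ _ _ (fun x : Equiv.Perm α => x = 1)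
        (by rintro x y rfl rfl; simp) rfl ?_
      intro j hj
      have hj0 : (Pi.single i (1:ZMod 2) : ι → ZMod 2) j = 0 :=
        Pi.single_eq_of_ne (Finset.mem_erase.1 hj).1 _
      simp [hj0]
    rw [h2, mul_one, Pi.single_eq_same]
    rfl

end Gen

section Bounds
theorem hb1 {s i : ℕ} (h : i < s) : 2 * i < 4 * s := by omega
theorem hb2 {s i : ℕ} (h : i < s) : 2 * i + 1 < 4 * s := by omega
theorem hb3 {s i : ℕ} (h : i < s) : 2 * i + 2 < 4 * s := by omega
theorem hb4 {s i : ℕ} (h : i < s) : 2 * i + 3 < 4 * s := by omega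
theorem hc3 {s i : ℕ} (h : i < s - 1) : 2 * i + 2 < 4 * s := by omega
theorem hc4 {s i : ℕ} (h : i < s - 1) : 2 * i + 3 < 4 * s := by omega
end Bounds

section Concrete

variable {s : ℕ}

/-- The transposition `(2i, 2i+1)` in `Sym(4s)`. -/
noncomputable def sig (s : ℕ) (i : Fin s) : Equiv.Perm (Fin (4 * s)) :=
  Equiv.swap ⟨2 * (i : ℕ), hb1 i.2⟩ ⟨2 * (i : ℕ) + 1, hb2 i.2⟩

lemma sig_apply_of_ne (i : Fin s) (x : Fin (4 * s)) (h1 : (x : ℕ) ≠ 2 * (i : ℕ))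
    (h2 : (x : ℕ) ≠ 2 * (i : ℕ) + 1) : sig s i x = x :=
  Equiv.swap_apply_of_ne_of_ne (fun hc => h1 (by rw [hc])) (fun hc => h2 (by rw [hc]))

lemma sig_inv (i : Fin s) : sig s i * sig s i = 1 := Equiv.swap_mul_self _ _

lemma sig_comm (i j : Fin s) : Commute (sig s i) (sig s j) := by
  rcases eq_or_ne i j with rfl | hij
  · exact Commute.refl _
  · have hvij : (i : ℕ) ≠ (j : ℕ) := fun hc => hij (Fin.ext hc)
    apply Equiv.Perm.Disjoint.commute
    intro x
    rcases eq_or_ne ((x : ℕ)) (2 * (i : ℕ)) with hx | hx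
    · right; exact sig_apply_of_ne j x (by omega) (by omega)
    · rcases eq_or_ne ((x : ℕ)) (2 * (i : ℕ) + 1) with hx' | hx'
      · right; exact sig_apply_of_ne j x (by omega) (by omega)
      · left; exact sig_apply_of_ne i x hx hx'

lemma sig_fix (i j : Fin s) (hij : j ≠ i) :
    sig s j (⟨2 * (i : ℕ), hb1 i.2⟩ : Fin (4 * s)) = ⟨2 * (i : ℕ), hb1 i.2⟩ := by
  have hvij : (j : ℕ) ≠ (i : ℕ) := fun hc => hij (Fin.ext hc)
  exact sig_apply_of_ne j _ (by simp; omega) (by simp; omega)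

lemma sig_move (i : Fin s) :
    sig s i (⟨2 * (i : ℕ), hb1 i.2⟩ : Fin (4 * s)) ≠ ⟨2 * (i : ℕ), hb1 i.2⟩ := by
  rw [sig, Equiv.swap_apply_left]
  intro hc
  have := Fin.mk.injEq .. ▸ hc
  simp at this

/-- The transposition `(2j+2, 2j+3)` (the conjugate of `sig` by `g`), indexed by `Fin (s-1)`. -/
noncomputable def tau (s : ℕ) (j : Fin (s - 1)) : Equiv.Perm (Fin (4 * s)) :=
  Equiv.swap ⟨2 * (j : ℕ) + 2, hc3 j.2⟩ ⟨2 * (j : ℕ) + 3, hc4 j.2⟩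

lemma tau_eq_sig (j : Fin (s - 1)) (hs : 1 ≤ s) :
    tau s j = sig s ⟨(j : ℕ) + 1, by have := j.2; omega⟩ := by
  have := j.2
  unfold tau sig
  congr 1 <;> exact Fin.ext (by simp; omega)

end Concrete

section Concrete2
variable {s : ℕ}

noncomputable def sig' (s : ℕ) (i : Fin s) : Equiv.Perm (Fin (4 * s)) :=
  Equiv.swap ⟨2 * (i : ℕ) + 2, hb3 i.2⟩ ⟨2 * (i : ℕ) + 3, hb4 i.2⟩

lemma tau_comm (i j : Fin (s - 1)) : Commute (tau s i) (tau s j) := by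
  rcases Nat.eq_zero_or_pos s with rfl | hs
  · exact i.elim0
  · rw [tau_eq_sig i hs, tau_eq_sig j hs]; exact sig_comm _ _

lemma tau_inv (i : Fin (s - 1)) : tau s i * tau s i = 1 := Equiv.swap_mul_self _ _

lemma tau_fix (i j : Fin (s - 1)) (hij : j ≠ i) :
    tau s j (⟨2 * (i : ℕ) + 2, hc3 i.2⟩ : Fin (4 * s)) = ⟨2 * (i : ℕ) + 2, hc3 i.2⟩ := by
  have hvij : (j : ℕ) ≠ (i : ℕ) := fun hc => hij (Fin.ext hc)
  exact Equiv.swap_apply_of_ne_of_ne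
    (fun hc => by simp only [Fin.mk.injEq] at hc; omega)
    (fun hc => by simp only [Fin.mk.injEq] at hc; omega)

lemma tau_move (i : Fin (s - 1)) :
    tau s i (⟨2 * (i : ℕ) + 2, hc3 i.2⟩ : Fin (4 * s)) ≠ ⟨2 * (i : ℕ) + 2, hc3 i.2⟩ := by
  rw [tau, Equiv.swap_apply_left]
  intro hc
  have := congrArg Fin.val hc
  simp at this

end Concrete2

set_option maxHeartbeats 1000000 in
/-- Let `s ≥ 2`, `h = (1,2)`, `g = (1,3,5,…,4s−1)(2,4,6,…,4s)` in `Sym(4s)`, and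
`H = ⟨h, h^g, …, h^{g^{s−1}}⟩`. Then `H` is the internal direct product
`⟨(1,2)⟩ × ⟨(3,4)⟩ × ⋯ × ⟨(2s−1,2s)⟩ ≅ C₂^s`, and `H ∩ H^g ≅ C₂^{s−1}`.

Here `Sym(4s)` is realized as `Equiv.Perm (Fin (4s))` with points `0,…,4s−1` corresponding
to `1,…,4s`. Since the paper composes permutations left-to-right while Mathlib's
`Equiv.Perm` composes right-to-left, the paper's conjugate `x^g = g⁻¹ x g` is
`g * x * g⁻¹` here, i.e. the image of `x` under `MulAut.conj g`. -/
theorem stmt7 (s : ℕ) (hs : 2 ≤ s)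
    (h g : Equiv.Perm (Fin (4 * s)))
    (hh : h = Equiv.swap ⟨0, by omega⟩ ⟨1, by omega⟩)
    (hg : ∀ i : Fin (4 * s), (g i : ℕ) =
      if (i : ℕ) % 2 = 0 then (if (i : ℕ) = 4 * s - 2 then 0 else (i : ℕ) + 2)
      else (if (i : ℕ) = 4 * s - 1 then 1 else (i : ℕ) + 2)) :
    Subgroup.closure {x : Equiv.Perm (Fin (4 * s)) |
        ∃ i : Fin s, x = g ^ (i : ℕ) * h * (g ^ (i : ℕ))⁻¹} =
      Subgroup.closure {x : Equiv.Perm (Fin (4 * s)) |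
        ∃ i : Fin s, x = Equiv.swap (⟨2 * (i : ℕ), by have := i.2; omega⟩ : Fin (4 * s))
          ⟨2 * (i : ℕ) + 1, by have := i.2; omega⟩} ∧
    Nonempty
      (↥(Subgroup.closure {x : Equiv.Perm (Fin (4 * s)) |
          ∃ i : Fin s, x = g ^ (i : ℕ) * h * (g ^ (i : ℕ))⁻¹}) ≃*
        Multiplicative (Fin s → ZMod 2)) ∧
    Nonempty
      (↥(Subgroup.closure {x : Equiv.Perm (Fin (4 * s)) |
            ∃ i : Fin s, x = g ^ (i : ℕ) * h * (g ^ (i : ℕ))⁻¹} ⊓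
          Subgroup.map (MulAut.conj g).toMonoidHom
            (Subgroup.closure {x : Equiv.Perm (Fin (4 * s)) |
              ∃ i : Fin s, x = g ^ (i : ℕ) * h * (g ^ (i : ℕ))⁻¹})) ≃*
        Multiplicative (Fin (s - 1) → ZMod 2)) := by
  have h4s : 0 < 4 * s := by omega
  have hs0 : 0 < s := by omega
  -- basic computation with `g`
  have g_lt : ∀ x : Fin (4 * s), (x : ℕ) < 4 * s - 2 → (g x : ℕ) = (x : ℕ) + 2 := by
    intro x hx
    rw [hg x]
    split_ifs <;> omega
  have gpow : ∀ k : ℕ, k < s → ∀ x : Fin (4 * s), (x : ℕ) < 2 →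
      (((g ^ k) x) : ℕ) = 2 * k + (x : ℕ) := by
    intro k
    induction k with
    | zero => intro _ x _; simp
    | succ n ih =>
      intro hk x hx
      have h0 := ih (by omega) x hx
      rw [pow_succ', Equiv.Perm.mul_apply, g_lt ((g ^ n) x) (by omega), h0]
      omega
  -- conjugates are the transpositions
  have conj_eq : ∀ i : Fin s, g ^ (i : ℕ) * h * (g ^ (i : ℕ))⁻¹ = sig s i := by
    intro i
    rw [hh, ← Equiv.swap_apply_apply]
    unfold sig
    congr 1
    · exact Fin.ext (by rw [gpow (i : ℕ) i.2 _ (by simp)]; simp)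
    · exact Fin.ext (by rw [gpow (i : ℕ) i.2 _ (by simp)])
  -- sets
  have hS1 : {x : Equiv.Perm (Fin (4 * s)) |
      ∃ i : Fin s, x = g ^ (i : ℕ) * h * (g ^ (i : ℕ))⁻¹} = Set.range (sig s) := by
    ext x
    constructor
    · rintro ⟨i, rfl⟩; exact ⟨i, (conj_eq i).symm⟩
    · rintro ⟨i, rfl⟩; exact ⟨i, (conj_eq i).symm⟩
  have hS2 : {x : Equiv.Perm (Fin (4 * s)) |
      ∃ i : Fin s, x = Equiv.swap (⟨2 * (i : ℕ), by have := i.2; omega⟩ : Fin (4 * s))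
        ⟨2 * (i : ℕ) + 1, by have := i.2; omega⟩} = Set.range (sig s) := by
    ext x
    exact ⟨fun ⟨i, hi⟩ => ⟨i, hi.symm⟩, fun ⟨i, hi⟩ => ⟨i, hi.symm⟩⟩
  -- the injective hom for H
  have hinj : Function.Injective (phi (sig s) sig_comm sig_inv) :=
    phi_injective (sig s) sig_comm sig_inv
      (fun i => ⟨2 * (i : ℕ), hb1 i.2⟩) sig_fix sig_move
  have hrange : Subgroup.closure {x : Equiv.Perm (Fin (4 * s)) |
      ∃ i : Fin s, x = g ^ (i : ℕ) * h * (g ^ (i : ℕ))⁻¹}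
      = (phi (sig s) sig_comm sig_inv).range := by
    rw [hS1, phi_range]
  refine ⟨by rw [hS1, hS2], ⟨?_⟩, ⟨?_⟩⟩
  · exact (MulEquiv.subgroupCongr hrange).trans (MonoidHom.ofInjective hinj).symm
  -- the intersection
  · have conj_sig : ∀ i : Fin s, (MulAut.conj g).toMonoidHom (sig s i) = sig' s i := by
      intro i
      show g * sig s i * g⁻¹ = sig' s i
      unfold sig sig'
      rw [← Equiv.swap_apply_apply]
      have hi := i.2
      congr 1
      · exact Fin.ext (by rw [g_lt _ (by simp; omega)])
      · exact Fin.ext (by rw [g_lt _ (by simp; omega)])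
    have hmap : Subgroup.map (MulAut.conj g).toMonoidHom
        (Subgroup.closure {x : Equiv.Perm (Fin (4 * s)) |
          ∃ i : Fin s, x = g ^ (i : ℕ) * h * (g ^ (i : ℕ))⁻¹})
        = Subgroup.closure (Set.range (sig' s)) := by
      rw [hS1, MonoidHom.map_closure]
      congr 1
      rw [← Set.range_comp]
      exact congrArg Set.range (funext conj_sig)
    have hinf : Subgroup.closure (Set.range (sig s)) ⊓ Subgroup.closure (Set.range (sig' s))
        = Subgroup.closure (Set.range (tau s)) := by
      apply le_antisymm
      · rintro x ⟨hx1, hx2⟩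
        rw [← phi_range (sig s) sig_comm sig_inv] at hx1
        obtain ⟨f, rfl⟩ := hx1
        -- all elements of closure (range sig') fix 0
        have hfix0 : (phi (sig s) sig_comm sig_inv f) (⟨0, h4s⟩ : Fin (4 * s))
            = ⟨0, h4s⟩ := by
          refine Subgroup.closure_induction ?_ rfl ?_ ?_ hx2
          · rintro y ⟨i, rfl⟩
            exact Equiv.swap_apply_of_ne_of_ne
              (fun hc => by have := congrArg Fin.val hc; simp at this)
              (fun hc => by have := congrArg Fin.val hc; simp at this)
          · intro u v _ _ hu hv
            simp only [Equiv.Perm.mul_apply, hv, hu]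
          · intro u _ hu
            conv_lhs => rw [← hu]
            exact Equiv.symm_apply_apply u _
        have f0 : (Multiplicative.toAdd f) ⟨0, hs0⟩ = 0 := by
          by_contra hne
          have hv : ((Multiplicative.toAdd f) ⟨0, hs0⟩).val = 1 := by
            have h1 := ZMod.val_lt ((Multiplicative.toAdd f) ⟨0, hs0⟩)
            have h2 : ((Multiplicative.toAdd f) ⟨0, hs0⟩).val ≠ 0 := by
              intro h0; exact hne ((ZMod.val_eq_zero _).1 h0)
            omega
          have heval := phi_apply_a (sig s) sig_comm sig_inv
            (fun i => ⟨2 * (i : ℕ), hb1 i.2⟩) sig_fix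
            (Multiplicative.toAdd f) ⟨0, hs0⟩
          rw [ofAdd_toAdd] at heval
          have ha0 : (⟨2 * (((⟨0, hs0⟩ : Fin s)) : ℕ), hb1 (⟨0, hs0⟩ : Fin s).2⟩ : Fin (4 * s))
              = ⟨0, h4s⟩ := Fin.ext (by simp)
          rw [ha0, hfix0, hv, pow_one] at heval
          exact sig_move ⟨0, hs0⟩ (by rw [ha0]; exact heval.symm)
        show (Finset.univ.noncommProd
            (fun i => sig s i ^ ((Multiplicative.toAdd f) i).val)
            (comm_aux (sig s) sig_comm _ _)) ∈ Subgroup.closure (Set.range (tau s))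
        refine Finset.noncommProd_induction _ _ _
          (· ∈ Subgroup.closure (Set.range (tau s))) (fun _ _ => mul_mem) (one_mem _) ?_
        intro i _
        rcases Nat.eq_zero_or_pos (i : ℕ) with hi0 | hip
        · have hieq : i = ⟨0, hs0⟩ := Fin.ext hi0
          rw [hieq, f0]
          simp only [ZMod.val_zero, pow_zero]
          exact one_mem _
        · have htau : tau s ⟨(i : ℕ) - 1, by have := i.2; omega⟩ = sig s i := by
            unfold tau sig
            have := i.2
            congr 1 <;> exact Fin.ext (by simp; omega)
          have hmem : sig s i ∈ Subgroup.closure (Set.range (tau s)) :=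
            Subgroup.subset_closure ⟨_, htau⟩
          exact pow_mem hmem _
      · refine le_inf ?_ ?_ <;> rw [Subgroup.closure_le] <;> rintro x ⟨j, rfl⟩
        · exact Subgroup.subset_closure ⟨⟨(j : ℕ) + 1, by have := j.2; omega⟩,
            (tau_eq_sig j (by omega)).symm⟩
        · refine Subgroup.subset_closure ⟨⟨(j : ℕ), by have := j.2; omega⟩, ?_⟩
          unfold sig' tau
          congr 1
    have hinj' : Function.Injective (phi (tau s) tau_comm tau_inv) :=
      phi_injective (tau s) tau_comm tau_inv
        (fun i => ⟨2 * (i : ℕ) + 2, hc3 i.2⟩) tau_fix tau_move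
    have heq : Subgroup.closure {x : Equiv.Perm (Fin (4 * s)) |
          ∃ i : Fin s, x = g ^ (i : ℕ) * h * (g ^ (i : ℕ))⁻¹} ⊓
        Subgroup.map (MulAut.conj g).toMonoidHom
          (Subgroup.closure {x : Equiv.Perm (Fin (4 * s)) |
            ∃ i : Fin s, x = g ^ (i : ℕ) * h * (g ^ (i : ℕ))⁻¹})
        = (phi (tau s) tau_comm tau_inv).range := by
      rw [hmap, hS1, hinf, phi_range]
    exact (MulEquiv.subgroupCongr heq).trans (MonoidHom.ofInjective hinj').symm
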